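/- Let G = ([W], E) be a connected graph in which every cycle has even length (i.e., G is bipartite), and let s ∈ (0,1)^W be a skill vector with no zero entries. Then for any α > 1 with α·max_i s_i ≤ 1, there exists s' ∈ [-1,1]^W with s' ∉ {s, -s} such that s'_i s'_j = s_i s_j for every edge (i,j) ∈ E. -/

import Mathlib

open SimpleGraph Walk

variable {V : Type*} [DecidableEq V] {G : SimpleGraph V}

/-- If a walk's support has a duplicate, one can excise a nontrivial closed subwalk. -/
lemma exists_closed_subwalk {u v : V} (q : G.Walk u v) (hnd : ¬ q.support.Nodup) :
    ∃ (x : V) (c : G.Walk x x) (r : G.Walk u v),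
      1 ≤ c.length ∧ c.length + r.length = q.length := by
  induction q with
  | nil => simp at hnd
  | @cons a b c h q' ih =>
    rw [Walk.support_cons, List.nodup_cons] at hnd
    push_neg at hnd
    by_cases hu : a ∈ q'.support
    · refine ⟨a, Walk.cons h (q'.takeUntil a hu), q'.dropUntil a hu, by simp, ?_⟩
      have := congrArg Walk.length (q'.take_spec hu)
      rw [Walk.length_append] at this
      simp [Walk.length_cons]
      omega
    · obtain ⟨x, c, r, h1, h2⟩ := ih (hnd (fun hmem => absurd hmem hu))
      exact ⟨x, c, Walk.cons h r, h1, by simp [Walk.length_cons]; omega⟩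

/-- An odd closed walk contains an odd cycle. -/
lemma odd_closed_walk_exists_odd_cycle :
    ∀ (n : ℕ) {v : V} (p : G.Walk v v), p.length = n → Odd p.length →
      ∃ (u : V) (c : G.Walk u u), c.IsCycle ∧ Odd c.length := by
  intro n
  induction n using Nat.strong_induction_on with
  | _ n ih =>
    intro v p hn hodd
    cases p with
    | nil => simp at hodd
    | @cons _ w _ h q =>
      by_cases hnd : q.support.Nodup
      · by_cases he : s(v, w) ∈ q.edges
        · exfalso
          cases q with
          | nil => simp at he
          | @cons _ x _ h' q' =>
            rw [Walk.edges_cons, List.mem_cons] at he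
            rcases he with he | he
            · rw [Sym2.eq_iff] at he
              rcases he with ⟨hvw, hwx⟩ | ⟨hvx, _⟩
              · exact h.ne hvw
              · subst hvx
                have hq' : q'.IsPath := by
                  rw [Walk.isPath_def]
                  rw [Walk.support_cons, List.nodup_cons] at hnd
                  exact hnd.2
                have : q' = Walk.nil := congrArg Subtype.val (Path.loop_eq ⟨q', hq'⟩)
                subst this
                simp [Nat.odd_iff] at hodd
            · have : w ∈ q'.support := Walk.snd_mem_support_of_mem_edges q' he
              rw [Walk.support_cons, List.nodup_cons] at hnd
              exact hnd.1 this
        · refine ⟨v, Walk.cons h q, ?_, hodd⟩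
          rw [Walk.cons_isCycle_iff]
          exact ⟨(Walk.isPath_def q).mpr hnd, he⟩
      · obtain ⟨x, c, r, h1, h2⟩ := exists_closed_subwalk q hnd
        have hsum : c.length + (Walk.cons h r).length = n := by
          rw [← hn]; simp [Walk.length_cons]; omega
        rcases Nat.even_or_odd c.length with hc | hc
        · have hodd' : Odd (Walk.cons h r).length := by
            have := hn ▸ hodd
            rcases Nat.even_or_odd (Walk.cons h r).length with h2' | h2'
            · exfalso; rw [← hsum] at this
              exact (Nat.not_even_iff_odd.mpr this) (Nat.even_add.mpr (by tauto))
            · exact h2'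
          exact ih (Walk.cons h r).length (by omega) (Walk.cons h r) rfl hodd'
        · exact ih c.length (by simp [Walk.length_cons] at hsum ⊢; omega) c rfl hc

/-- On a connected bipartite graph (every cycle has even length), skills are not
identifiable: for `s ∈ (0,1)^W` and any `α > 1` with `α · s_i ≤ 1` for all `i`, there is
`s' ∈ [-1,1]^W` with `s' ∉ {s, -s}` such that `s'_i s'_j = s_i s_j` on every edge. -/
theorem stmt3 (W : ℕ) (hW : 0 < W) (G : SimpleGraph (Fin W)) (hconn : G.Connected)
    (heven : ∀ (v : Fin W) (p : G.Walk v v), p.IsCycle → Even p.length)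
    (s : Fin W → ℝ) (hs : ∀ i, 0 < s i ∧ s i < 1)
    (α : ℝ) (hα : 1 < α) (hαs : ∀ i, α * s i ≤ 1) :
    ∃ s' : Fin W → ℝ, (∀ i, s' i ∈ Set.Icc (-1 : ℝ) 1) ∧
      s' ≠ s ∧ s' ≠ (fun i => - s i) ∧
      ∀ i j, G.Adj i j → s' i * s' j = s i * s j := by
  have hα0 : (0:ℝ) < α := lt_trans one_pos hα
  set v0 : Fin W := ⟨0, hW⟩ with hv0
  have key : ∀ i j, G.Adj i j → (G.dist v0 i) % 2 ≠ (G.dist v0 j) % 2 := by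
    intro i j hadj hpar
    obtain ⟨p, hp⟩ := hconn.exists_walk_length_eq_dist v0 i
    obtain ⟨q, hq⟩ := hconn.exists_walk_length_eq_dist v0 j
    set wk : G.Walk i i := p.reverse.append (q.append hadj.symm.toWalk) with hwk
    have hlen : wk.length = G.dist v0 i + G.dist v0 j + 1 := by
      simp [hwk, Walk.length_append, Walk.length_reverse, hp, hq]
      omega
    have hoddw : Odd wk.length := by rw [hlen, Nat.odd_iff]; omega
    obtain ⟨u, c, hc, hcodd⟩ := odd_closed_walk_exists_odd_cycle wk.length wk rfl hoddw
    exact (Nat.not_even_iff_odd.mpr hcodd) (heven u c hc)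
  refine ⟨fun i => if G.dist v0 i % 2 = 0 then α * s i else s i / α, ?_, ?_, ?_, ?_⟩
  · intro i
    obtain ⟨h1, h2⟩ := hs i
    by_cases hi : G.dist v0 i % 2 = 0 <;> simp [hi, Set.mem_Icc]
    · constructor
      · nlinarith
      · exact hαs i
    · constructor
      · have : 0 < s i / α := div_pos h1 hα0
        linarith
      · rw [div_le_one hα0]; nlinarith
  · intro heq
    have := congrFun heq v0
    simp [SimpleGraph.dist_self] at this
    obtain ⟨h1, _⟩ := hs v0
    nlinarith
  · intro heq
    have := congrFun heq v0
    simp [SimpleGraph.dist_self] at this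
    obtain ⟨h1, _⟩ := hs v0
    nlinarith
  · intro i j hadj
    have hne := key i j hadj
    by_cases hi : G.dist v0 i % 2 = 0
    · have hj : ¬ (G.dist v0 j % 2 = 0) := fun hj => hne (by omega)
      simp only [hi, hj, if_true, if_false]
      field_simp
    · have hj : G.dist v0 j % 2 = 0 := by omega
      simp only [hi, hj, if_true, if_false]
      field_simp
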